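/- If the nonwandering set of a continuous interval map f consists of finitely many periodic points, then the topological entropy of f is zero. -/

import Mathlib

open Set Filter Dynamics UniformSpace Uniformity
open scoped ENNReal

namespace Stmt15Aux

/-- minimal gap of a finite set -/
lemma exists_gap {S : Set ℝ} (h : S.Finite) :
    ∃ δ > 0, ∀ p ∈ S, ∀ q ∈ S, p ≠ q → δ ≤ dist p q := by
  classical
  set G : Finset ℝ := ((h.toFinset ×ˢ h.toFinset).filter fun pq => pq.1 ≠ pq.2).image
      fun pq => dist pq.1 pq.2 with hG
  have hmem : ∀ p ∈ S, ∀ q ∈ S, p ≠ q → dist p q ∈ G := by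
    intro p hp q hq hpq
    exact Finset.mem_image.2 ⟨(p, q), Finset.mem_filter.2
      ⟨Finset.mem_product.2 ⟨h.mem_toFinset.2 hp, h.mem_toFinset.2 hq⟩, hpq⟩, rfl⟩
  rcases G.eq_empty_or_nonempty with hGe | hGne
  · exact ⟨1, one_pos, fun p hp q hq hpq => absurd (hmem p hp q hq hpq) (by simp [hGe])⟩
  · refine ⟨G.min' hGne, ?_, fun p hp q hq hpq => G.min'_le _ (hmem p hp q hq hpq)⟩
    have hmm := G.min'_mem hGne
    rcases Finset.mem_image.1 hmm with ⟨pq, hpq, hd⟩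
    rw [← hd]
    exact dist_pos.2 (Finset.mem_filter.1 hpq).2

/-- For every δ > 0 there is n with log((n+1)^R * C) ≤ δ n. -/
lemma exists_small_log (R C : ℕ) (hC : 0 < C) {δ : ℝ} (hδ : 0 < δ) :
    ∃ n : ℕ, 0 < n ∧ Real.log (((n + 1) ^ R * C : ℕ) : ℝ) ≤ δ * n := by
  have h1 : Filter.Tendsto (fun x : ℝ => Real.log x / x) atTop (nhds 0) := by
    simpa using Real.tendsto_pow_log_div_mul_add_atTop 1 0 1 one_ne_zero
  have h3 : Filter.Tendsto (fun n : ℕ => Real.log (n + 1) / (n + 1)) atTop (nhds 0) := by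
    have := h1.comp (Filter.tendsto_atTop_add_const_right atTop (1 : ℝ)
      tendsto_natCast_atTop_atTop)
    exact this
  have hB : Filter.Tendsto (fun n : ℕ => ((n : ℝ) + 1) / n) atTop (nhds 1) := by
    have h0 : Filter.Tendsto (fun n : ℕ => 1 + 1 / (n : ℝ)) atTop (nhds 1) := by
      simpa using (tendsto_const_nhds (x := (1 : ℝ))).add tendsto_one_div_atTop_nhds_zero_nat
    apply h0.congr'
    filter_upwards [Filter.eventually_gt_atTop 0] with n hn
    have : (n : ℝ) ≠ 0 := Nat.cast_ne_zero.2 hn.ne'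
    field_simp
  have hC2 : Filter.Tendsto (fun n : ℕ => Real.log C / n) atTop (nhds 0) :=
    tendsto_const_div_atTop_nhds_zero_nat _
  have hF : Filter.Tendsto
      (fun n : ℕ => (R : ℝ) * (Real.log (n + 1) / (n + 1)) * (((n : ℝ) + 1) / n)
        + Real.log C / n) atTop (nhds 0) := by
    have := ((tendsto_const_nhds (x := (R : ℝ))).mul h3).mul hB |>.add hC2
    simpa using this
  have hev : ∀ᶠ n : ℕ in atTop,
      Real.log (((n + 1) ^ R * C : ℕ) : ℝ) / n
        = (R : ℝ) * (Real.log (n + 1) / (n + 1)) * (((n : ℝ) + 1) / n) + Real.log C / n := by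
    filter_upwards [Filter.eventually_gt_atTop 0] with n hn
    have hn' : (n : ℝ) ≠ 0 := Nat.cast_ne_zero.2 hn.ne'
    have hn1 : ((n : ℝ) + 1) ≠ 0 := by positivity
    have hCne : (C : ℝ) ≠ 0 := Nat.cast_ne_zero.2 hC.ne'
    have hpne : ((n : ℝ) + 1) ^ R ≠ 0 := pow_ne_zero _ hn1
    push_cast
    rw [Real.log_mul hpne hCne, Real.log_pow]
    field_simp
  have hF' : Filter.Tendsto (fun n : ℕ => Real.log (((n + 1) ^ R * C : ℕ) : ℝ) / n)
      atTop (nhds 0) := hF.congr' (hev.mono fun n h => h.symm)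
  have := hF'.eventually_lt_const hδ
  rcases ((this.and (Filter.eventually_gt_atTop 0)).exists) with ⟨n, hlt, hn⟩
  refine ⟨n, hn, ?_⟩
  have hn' : (0 : ℝ) < n := by exact_mod_cast hn
  rw [div_lt_iff₀ hn'] at hlt
  linarith [hlt]


/-- Main covering bound: polynomially many dynamical balls suffice. -/
lemma main_bound (a b : ℝ) (f : ℝ → ℝ)
    (hc : ContinuousOn f (Set.Icc a b))
    (hm : Set.MapsTo f (Set.Icc a b) (Set.Icc a b))
    (NW : Set ℝ) (hNWsub : NW ⊆ Set.Icc a b) (hfin : NW.Finite)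
    (hNWinv : ∀ p ∈ NW, f p ∈ NW)
    (hwander : ∀ x ∈ Set.Icc a b, x ∉ NW →
      ∃ U ∈ nhdsWithin x (Set.Icc a b), ∀ n > 0, f^[n] '' U ∩ U = ∅)
    {η : ℝ} (hη : 0 < η) :
    ∃ R C : ℕ, 0 < C ∧ ∀ n : ℕ, ∃ s : Finset ℝ,
      IsDynCoverOf f (Set.Icc a b) {p : ℝ × ℝ | dist p.1 p.2 < η / 2} n s ∧
      s.card ≤ (n + 1) ^ R * C := by
  classical
  set K : Set ℝ := Set.Icc a b with hK
  -- gap of NW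
  obtain ⟨γ, hγpos, hγ⟩ := exists_gap hfin
  set ε' : ℝ := min (η / 4) (γ / 3) with hε'
  have hε'pos : 0 < ε' := lt_min (by linarith) (by linarith)
  -- uniform continuity
  have hu : UniformContinuousOn f K := isCompact_Icc.uniformContinuousOn_of_continuous hc
  obtain ⟨δ, hδpos, hδ⟩ := (Metric.uniformContinuousOn_iff).1 hu ε' hε'pos
  set ρ : ℝ := min δ ε' with hρ
  have hρpos : 0 < ρ := lt_min hδpos hε'pos
  set V : Set ℝ := ⋃ p ∈ NW, Metric.ball p ρ with hV
  have hVopen : IsOpen V := isOpen_biUnion fun _ _ => Metric.isOpen_ball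
  set W : Set ℝ := K \ V with hW
  have hWcomp : IsCompact W := isCompact_Icc.diff hVopen
  -- the symbol function near NW
  set pSym : ℝ → ℝ := fun z => if h : ∃ p ∈ NW, dist z p < ρ then h.choose else 0 with hpS
  have hpSym : ∀ z ∈ V, pSym z ∈ NW ∧ dist z (pSym z) < ρ := by
    intro z hz
    rw [hV, Set.mem_iUnion₂] at hz
    obtain ⟨p, hp, hzp⟩ := hz
    rw [Metric.mem_ball] at hzp
    have h : ∃ p ∈ NW, dist z p < ρ := ⟨p, hp, hzp⟩
    simp only [hpS, dif_pos h]
    exact ⟨h.choose_spec.1, h.choose_spec.2⟩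
  -- orbits in K
  have horb : ∀ x ∈ K, ∀ k : ℕ, f^[k] x ∈ K := fun x hx k => hm.iterate k hx
  -- block lemma
  have hblock : ∀ x, ∀ k : ℕ, f^[k] x ∈ K → f^[k] x ∈ V → f^[k+1] x ∈ V →
      pSym (f^[k+1] x) = f (pSym (f^[k] x)) := by
    intro x k hxK hxV hxV'
    obtain ⟨hpNW, hpd⟩ := hpSym _ hxV
    obtain ⟨hqNW, hqd⟩ := hpSym _ hxV'
    set z := f^[k] x
    have hfz : f^[k+1] x = f z := Function.iterate_succ_apply' f k x
    rw [hfz] at hqNW hqd ⊢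
    have h1 : dist (f z) (f (pSym z)) < ε' :=
      hδ z hxK (pSym z) (hNWsub hpNW) (lt_of_lt_of_le hpd (min_le_left _ _))
    have hfp : f (pSym z) ∈ NW := hNWinv _ hpNW
    by_contra hne
    have hgap : γ ≤ dist (pSym (f z)) (f (pSym z)) := hγ _ hqNW _ hfp hne
    have h3 : dist (pSym (f z)) (f (pSym z)) ≤
        dist (pSym (f z)) (f z) + dist (f z) (f (pSym z)) := dist_triangle _ _ _
    rw [dist_comm (pSym (f z)) (f z)] at h3
    have hε'γ : ε' ≤ γ / 3 := min_le_right _ _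
    have hqd' : dist (f z) (pSym (f z)) < ε' := hqd.trans_le (min_le_right δ ε')
    linarith
  -- wandering neighbourhoods
  have hWn : ∀ x ∈ W, ∃ O : Set ℝ, IsOpen O ∧ x ∈ O ∧ (O ∩ K ⊆ Metric.ball x ε') ∧
      ∀ i j : ℕ, i < j → ∀ y, f^[i] y ∈ O ∩ K → f^[j] y ∈ O ∩ K → False := by
    intro x hx
    have hxK : x ∈ K := hx.1
    have hxNW : x ∉ NW := by
      intro hmem
      exact hx.2 (Set.mem_biUnion hmem (Metric.mem_ball_self hρpos))
    obtain ⟨U, hU, hUdisj⟩ := hwander x hxK hxNW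
    have hU' : U ∩ Metric.ball x ε' ∈ nhdsWithin x K :=
      Filter.inter_mem hU (mem_nhdsWithin_of_mem_nhds (Metric.ball_mem_nhds x hε'pos))
    obtain ⟨O, hOopen, hxO, hOsub⟩ := mem_nhdsWithin.1 hU'
    refine ⟨O, hOopen, hxO, fun y hy => (hOsub hy).2, ?_⟩
    intro i j hij y hyi hyj
    have h1 : f^[i] y ∈ U := (hOsub hyi).1
    have h2 : f^[j] y ∈ U := (hOsub hyj).1
    have h3 : f^[j] y = f^[j-i] (f^[i] y) := by
      rw [← Function.iterate_add_apply, Nat.sub_add_cancel hij.le]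
    have h4 : f^[j] y ∈ f^[j-i] '' U ∩ U := ⟨⟨f^[i] y, h1, h3.symm⟩, h2⟩
    rw [hUdisj (j - i) (Nat.sub_pos_of_lt hij)] at h4
    exact h4
  choose! O hOopen hOmem hOball hOdisj using hWn
  -- finite subcover
  obtain ⟨W', hW'sub, hW'fin, hW'cov⟩ := hWcomp.elim_finite_subcover_image
    (fun i hi => hOopen i hi) (fun x hx => Set.mem_biUnion hx (hOmem x hx))
  set t : Finset ℝ := hW'fin.toFinset with ht
  set NWf : Finset ℝ := hfin.toFinset with hNWf
  set R : ℕ := t.card with hR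
  set N : ℕ := NWf.card with hN
  refine ⟨R, (N + 1) ^ (R + 1), pow_pos (Nat.succ_pos N) _, fun n => ?_⟩
  set Tset : ℝ → Set ℝ := fun i => O i ∩ K with hTset
  have honce : ∀ i ∈ W', ∀ y, ∀ k l : ℕ, k < l →
      f^[k] y ∈ Tset i → f^[l] y ∈ Tset i → False :=
    fun i hi y k l hkl h1 h2 => hOdisj i (hW'sub hi) k l hkl y h1 h2
  have hball : ∀ i ∈ W', Tset i ⊆ Metric.ball i ε' := fun i hi => hOball i (hW'sub hi)
  have hmemW' : ∀ i : ℝ, i ∈ t → i ∈ W' := fun i hi => hW'fin.mem_toFinset.1 hi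
  -- the itinerary data
  set w : ℝ → {i : ℝ // i ∈ t} → Option (Fin n) := fun x i =>
    if h : ∃ k : Fin n, f^[(k : ℕ)] x ∈ Tset i.1 then some h.choose else none with hw
  have hw_some : ∀ x (i : {i : ℝ // i ∈ t}) (k : Fin n),
      w x i = some k ↔ f^[(k : ℕ)] x ∈ Tset i.1 := by
    intro x i k
    constructor
    · intro h
      rw [hw] at h
      by_cases hex : ∃ k : Fin n, f^[(k : ℕ)] x ∈ Tset i.1
      · simp only [dif_pos hex] at h
        rw [← Option.some_inj.1 h]
        exact hex.choose_spec
      · simp [dif_neg hex] at h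
    · intro h
      have hex : ∃ k : Fin n, f^[(k : ℕ)] x ∈ Tset i.1 := ⟨k, h⟩
      simp only [hw, dif_pos hex]
      congr 1
      have hc := hex.choose_spec
      rcases Nat.lt_trichotomy (hex.choose : ℕ) (k : ℕ) with hlt | heq | hgt
      · exact absurd (honce i.1 (hmemW' i.1 i.2) x _ _ hlt hc h) (fun h => h)
      · exact Fin.ext heq
      · exact absurd (honce i.1 (hmemW' i.1 i.2) x _ _ hgt h hc) (fun h => h)
  set v : ℝ → Option {i : ℝ // i ∈ t} → Option {p : ℝ // p ∈ NWf} := fun x o =>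
    o.elim (if h : x ∈ V then some ⟨pSym x, hfin.mem_toFinset.2 (hpSym x h).1⟩ else none)
      (fun i => (w x i).elim none (fun k =>
        if h : (k : ℕ) + 1 < n ∧ f^[(k : ℕ) + 1] x ∈ V
        then some ⟨pSym (f^[(k : ℕ) + 1] x), hfin.mem_toFinset.2 (hpSym _ h.2).1⟩
        else none)) with hv
  set dataOf : ℝ → ({i : ℝ // i ∈ t} → Option (Fin n)) ×
      (Option {i : ℝ // i ∈ t} → Option {p : ℝ // p ∈ NWf}) := fun x => (w x, v x) with hdata
  -- unmarked points are in V
  have hunmark : ∀ x ∈ K, ∀ k : ℕ, (¬ ∃ i : {i : ℝ // i ∈ t}, f^[k] x ∈ Tset i.1) →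
      f^[k] x ∈ V := by
    intro x hx k hnm
    by_contra hVn
    have hWmem : f^[k] x ∈ W := ⟨horb x hx k, hVn⟩
    have := hW'cov hWmem
    rw [Set.mem_iUnion₂] at this
    obtain ⟨i, hi, hOi⟩ := this
    exact hnm ⟨⟨i, hW'fin.mem_toFinset.2 hi⟩, hOi, horb x hx k⟩
  -- transfer of markings
  have hsame : ∀ x y, dataOf x = dataOf y → ∀ k : ℕ, k < n →
      ∀ i : {i : ℝ // i ∈ t}, f^[k] x ∈ Tset i.1 → f^[k] y ∈ Tset i.1 := by
    intro x y hxy k hk i hmem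
    have hwxy : w x = w y := congrArg Prod.fst hxy
    have h1 : w x i = some ⟨k, hk⟩ := (hw_some x i ⟨k, hk⟩).2 hmem
    have h2 : w y i = some ⟨k, hk⟩ := by rw [← hwxy]; exact h1
    exact (hw_some y i ⟨k, hk⟩).1 h2
  -- equality of ball symbols at unmarked times
  have hpEq : ∀ x, x ∈ K → ∀ y, y ∈ K → dataOf x = dataOf y → ∀ k : ℕ, k < n →
      (¬ ∃ i : {i : ℝ // i ∈ t}, f^[k] x ∈ Tset i.1) →
      pSym (f^[k] x) = pSym (f^[k] y) := by
    intro x hx y hy hxy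
    have hvxy : v x = v y := congrArg Prod.snd hxy
    intro k
    induction k with
    | zero =>
      intro hk hnm
      have hnmy : ¬ ∃ i : {i : ℝ // i ∈ t}, f^[0] y ∈ Tset i.1 := by
        rintro ⟨i, hi⟩
        exact hnm ⟨i, hsame y x hxy.symm 0 hk i hi⟩
      have hxV : x ∈ V := by have := hunmark x hx 0 hnm; rwa [Function.iterate_zero_apply] at this
      have hyV : y ∈ V := by have := hunmark y hy 0 hnmy; rwa [Function.iterate_zero_apply] at this
      have hvx : v x none = some ⟨pSym x, hfin.mem_toFinset.2 (hpSym x hxV).1⟩ := by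
        simp only [hv, Option.elim_none, dif_pos hxV]
      have hvy : v y none = some ⟨pSym y, hfin.mem_toFinset.2 (hpSym y hyV).1⟩ := by
        simp only [hv, Option.elim_none, dif_pos hyV]
      rw [hvxy, hvy] at hvx
      have := Subtype.ext_iff.1 (Option.some_inj.1 hvx)
      simpa [Function.iterate_zero_apply] using this.symm
    | succ m ih =>
      intro hk hnm
      have hm : m < n := Nat.lt_of_succ_lt hk
      have hnmy : ¬ ∃ i : {i : ℝ // i ∈ t}, f^[m+1] y ∈ Tset i.1 := by
        rintro ⟨i, hi⟩
        exact hnm ⟨i, hsame y x hxy.symm (m+1) hk i hi⟩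
      have hxV : f^[m+1] x ∈ V := hunmark x hx (m+1) hnm
      have hyV : f^[m+1] y ∈ V := hunmark y hy (m+1) hnmy
      by_cases hmm : ∃ i : {i : ℝ // i ∈ t}, f^[m] x ∈ Tset i.1
      · -- m is marked: use the v data
        obtain ⟨i, hi⟩ := hmm
        have hmy : f^[m] y ∈ Tset i.1 := hsame x y hxy m hm i hi
        have hwx : w x i = some ⟨m, hm⟩ := (hw_some x i ⟨m, hm⟩).2 hi
        have hwy : w y i = some ⟨m, hm⟩ := (hw_some y i ⟨m, hm⟩).2 hmy
        have hcx : ((⟨m, hm⟩ : Fin n) : ℕ) + 1 < n ∧ f^[((⟨m, hm⟩ : Fin n) : ℕ) + 1] x ∈ V :=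
          ⟨hk, hxV⟩
        have hcy : ((⟨m, hm⟩ : Fin n) : ℕ) + 1 < n ∧ f^[((⟨m, hm⟩ : Fin n) : ℕ) + 1] y ∈ V :=
          ⟨hk, hyV⟩
        have hvx : v x (some i) = some ⟨pSym (f^[m+1] x),
            hfin.mem_toFinset.2 (hpSym _ hcx.2).1⟩ := by
          simp only [hv, Option.elim_some, hwx, dif_pos hcx]
        have hvy : v y (some i) = some ⟨pSym (f^[m+1] y),
            hfin.mem_toFinset.2 (hpSym _ hcy.2).1⟩ := by
          simp only [hv, Option.elim_some, hwy, dif_pos hcy]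
        rw [hvxy, hvy] at hvx
        exact (Subtype.ext_iff.1 (Option.some_inj.1 hvx)).symm
      · -- m is unmarked: use the block lemma
        have hmV : f^[m] x ∈ V := hunmark x hx m hmm
        have hnmy' : ¬ ∃ i : {i : ℝ // i ∈ t}, f^[m] y ∈ Tset i.1 := by
          rintro ⟨i, hi⟩
          exact hmm ⟨i, hsame y x hxy.symm m hm i hi⟩
        have hmVy : f^[m] y ∈ V := hunmark y hy m hnmy'
        have ihm := ih hm hmm
        rw [hblock x m (horb x hx m) hmV hxV, hblock y m (horb y hy m) hmVy hyV, ihm]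
  -- closeness of orbits with equal data
  have hclose : ∀ x, x ∈ K → ∀ y, y ∈ K → dataOf x = dataOf y → ∀ k : ℕ, k < n →
      dist (f^[k] x) (f^[k] y) < η / 2 := by
    intro x hx y hy hxy k hk
    have hη4 : ε' ≤ η / 4 := min_le_left _ _
    by_cases hmm : ∃ i : {i : ℝ // i ∈ t}, f^[k] x ∈ Tset i.1
    · obtain ⟨i, hi⟩ := hmm
      have hiy : f^[k] y ∈ Tset i.1 := hsame x y hxy k hk i hi
      have hW'i : i.1 ∈ W' := hmemW' i.1 i.2
      have h1 : dist (f^[k] x) i.1 < ε' := Metric.mem_ball.1 (hball i.1 hW'i hi)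
      have h2 : dist (f^[k] y) i.1 < ε' := Metric.mem_ball.1 (hball i.1 hW'i hiy)
      calc dist (f^[k] x) (f^[k] y) ≤ dist (f^[k] x) i.1 + dist i.1 (f^[k] y) :=
            dist_triangle _ _ _
        _ < ε' + ε' := by rw [dist_comm i.1 (f^[k] y)]; exact add_lt_add h1 h2
        _ ≤ η / 2 := by linarith
    · have hnmy : ¬ ∃ i : {i : ℝ // i ∈ t}, f^[k] y ∈ Tset i.1 := by
        rintro ⟨i, hi⟩
        exact hmm ⟨i, hsame y x hxy.symm k hk i hi⟩
      have hxV : f^[k] x ∈ V := hunmark x hx k hmm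
      have hyV : f^[k] y ∈ V := hunmark y hy k hnmy
      have hpeq := hpEq x hx y hy hxy k hk hmm
      have h1 : dist (f^[k] x) (pSym (f^[k] x)) < ε' :=
        (hpSym _ hxV).2.trans_le (min_le_right δ ε')
      have h2 : dist (f^[k] y) (pSym (f^[k] y)) < ε' :=
        (hpSym _ hyV).2.trans_le (min_le_right δ ε')
      rw [hpeq] at h1
      calc dist (f^[k] x) (f^[k] y) ≤
            dist (f^[k] x) (pSym (f^[k] y)) + dist (pSym (f^[k] y)) (f^[k] y) :=
            dist_triangle _ _ _
        _ < ε' + ε' := by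
            rw [dist_comm (pSym (f^[k] y)) (f^[k] y)]
            exact add_lt_add h1 h2
        _ ≤ η / 2 := by linarith
  -- construct the cover from representatives of data fibers
  set rep : (({i : ℝ // i ∈ t} → Option (Fin n)) ×
      (Option {i : ℝ // i ∈ t} → Option {p : ℝ // p ∈ NWf})) → ℝ := fun d =>
    if h : ∃ x ∈ K, dataOf x = d then h.choose else 0 with hrep
  set s : Finset ℝ := Finset.image rep Finset.univ with hs
  refine ⟨s, ?_, ?_⟩
  · intro x hx
    have hex : ∃ x' ∈ K, dataOf x' = dataOf x := ⟨x, hx, rfl⟩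
    set y := rep (dataOf x) with hy
    have hyprop : y ∈ K ∧ dataOf y = dataOf x := by
      rw [hy, hrep]
      simp only [dif_pos hex]
      exact ⟨hex.choose_spec.1, hex.choose_spec.2⟩
    refine ⟨y, Finset.mem_coe.2 (Finset.mem_image.2 ⟨dataOf x, Finset.mem_univ _, rfl⟩), ?_⟩
    rw [mem_dynEntourage]
    intro k hk
    show dist (f^[k] x) (f^[k] y) < η / 2
    rw [dist_comm]
    exact hclose y hyprop.1 x hx hyprop.2 k hk
  · calc s.card ≤ Fintype.card (({i : ℝ // i ∈ t} → Option (Fin n)) ×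
        (Option {i : ℝ // i ∈ t} → Option {p : ℝ // p ∈ NWf})) := by
          rw [hs]
          exact (Finset.card_image_le).trans (by rw [Finset.card_univ])
      _ = (n + 1) ^ R * (N + 1) ^ (R + 1) := by
          simp [Fintype.card_fun, Fintype.card_option, Fintype.card_coe, Fintype.card_fin]
          rfl


end Stmt15Aux

open Stmt15Aux Dynamics
open scoped SetRel

/-- If the nonwandering set of a continuous interval map consists of finitely many
periodic points, then the topological entropy of the map is zero. -/
theorem stmt15 (a b : ℝ) (hab : a ≤ b) (f : ℝ → ℝ)
    (hc : ContinuousOn f (Set.Icc a b))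
    (hm : Set.MapsTo f (Set.Icc a b) (Set.Icc a b))
    (NW : Set ℝ)
    (hNW : NW = {p ∈ Set.Icc a b |
      ∀ U ∈ nhdsWithin p (Set.Icc a b), ∃ n > 0, (f^[n] '' U ∩ U).Nonempty})
    (hfin : NW.Finite) (hper : ∀ p ∈ NW, ∃ n > 0, f^[n] p = p) :
    Dynamics.coverEntropy f (Set.Icc a b) = 0 := by
  classical
  have hKne : (Set.Icc a b).Nonempty := Set.nonempty_Icc.2 hab
  have hNWsub : NW ⊆ Set.Icc a b := by rw [hNW]; exact fun p hp => hp.1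
  have hNWinv : ∀ p ∈ NW, f p ∈ NW := by
    intro p hp
    obtain ⟨n, hn, hpn⟩ := hper p hp
    have hpK : p ∈ Set.Icc a b := hNWsub hp
    have hfpK : f p ∈ Set.Icc a b := hm hpK
    have hfper : f^[n] (f p) = f p := by
      rw [← Function.iterate_succ_apply, Function.iterate_succ_apply', hpn]
    rw [hNW]
    refine ⟨hfpK, fun U hU => ⟨n, hn, ⟨f p, ?_, ?_⟩⟩⟩
    · exact ⟨f p, mem_of_mem_nhdsWithin hfpK hU, hfper⟩
    · exact mem_of_mem_nhdsWithin hfpK hU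
  have hwander : ∀ x ∈ Set.Icc a b, x ∉ NW →
      ∃ U ∈ nhdsWithin x (Set.Icc a b), ∀ n > 0, f^[n] '' U ∩ U = ∅ := by
    intro x hx hxn
    rw [hNW] at hxn
    have h1 : ¬ ∀ U ∈ nhdsWithin x (Set.Icc a b), ∃ n > 0, (f^[n] '' U ∩ U).Nonempty :=
      fun h => hxn ⟨hx, h⟩
    push_neg at h1
    obtain ⟨U, hU, hUe⟩ := h1
    exact ⟨U, hU, hUe⟩
  refine le_antisymm ?_ (Dynamics.coverEntropy_nonneg f hKne)
  rw [Dynamics.coverEntropy_eq_iSup_basis Metric.uniformity_basis_dist f (Set.Icc a b)]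
  refine iSup₂_le fun η hη => ?_
  obtain ⟨R, C, hC, hcov⟩ := main_bound a b f hc hm NW hNWsub hfin hNWinv hwander hη
  set U : Set (ℝ × ℝ) := {p : ℝ × ℝ | dist p.1 p.2 < η / 2} with hU
  have hUsymm : SetRel.IsSymm U := ⟨fun x y h => by
    simp only [hU, Set.mem_setOf_eq] at h ⊢
    rw [dist_comm]; exact h⟩
  have hUU : U ○ U ⊆ {p : ℝ × ℝ | dist p.1 p.2 < η} := by
    rintro ⟨x, z⟩ ⟨y, h1, h2⟩
    simp only [hU, Set.mem_setOf_eq] at h1 h2 ⊢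
    calc dist x z ≤ dist x y + dist y z := dist_triangle _ _ _
      _ < η / 2 + η / 2 := add_lt_add h1 h2
      _ = η := by ring
  refine le_trans (Dynamics.coverEntropyEntourage_antitone f (Set.Icc a b) hUU) ?_
  by_contra hc0
  push_neg at hc0
  obtain ⟨δ, hδ0, hδE⟩ := EReal.exists_between_coe_real hc0
  have hδpos : (0 : ℝ) < δ := by exact_mod_cast hδ0
  obtain ⟨n, hn, hlog⟩ := exists_small_log R C hC hδpos
  obtain ⟨s, hscov, hscard⟩ := hcov n
  have h1 : Dynamics.coverEntropyEntourage f (Set.Icc a b) (U ○ U)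
      ≤ ENNReal.log s.card / (n : EReal) :=
    hscov.coverEntropyEntourage_le_log_card_div hm hn.ne'
  set m : ℕ := (n + 1) ^ R * C with hmn
  have h2 : ENNReal.log (s.card : ℝ≥0∞) ≤ ENNReal.log ((m : ℕ) : ℝ≥0∞) :=
    ENNReal.log_monotone (by exact_mod_cast hscard)
  have h3 : Dynamics.coverEntropyEntourage f (Set.Icc a b) (U ○ U)
      ≤ ENNReal.log ((m : ℕ) : ℝ≥0∞) / (n : EReal) :=
    h1.trans (EReal.div_le_div_right_of_nonneg (by exact_mod_cast Nat.zero_le n) h2)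
  have hmpos : 0 < m := Nat.mul_pos (pow_pos n.succ_pos R) hC
  have h0 : (0 : ℝ) < ((m : ℝ≥0∞)).toReal := by
    rw [ENNReal.toReal_natCast]; exact_mod_cast hmpos
  have hlogm : ENNReal.log ((m : ℕ) : ℝ≥0∞) = ((Real.log m : ℝ) : EReal) := by
    rw [ENNReal.log_pos_real' h0, ENNReal.toReal_natCast]
  have hne : (n : EReal) = ((n : ℝ) : EReal) := by
    rw [EReal.coe_coe_eq_natCast]
  have h4 : ENNReal.log ((m : ℕ) : ℝ≥0∞) / (n : EReal) = ((Real.log m / n : ℝ) : EReal) := by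
    rw [hlogm, hne, ← EReal.coe_div]
  have h5 : (Real.log m / n : ℝ) ≤ δ := by
    rw [div_le_iff₀ (by exact_mod_cast hn : (0 : ℝ) < n)]
    exact hlog
  have h6 : Dynamics.coverEntropyEntourage f (Set.Icc a b) (U ○ U) ≤ (δ : EReal) := by
    rw [h4] at h3
    exact h3.trans (EReal.coe_le_coe_iff.2 h5)
  exact absurd h6 (not_le.2 hδE)
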